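/- For any two CDFs F and G on ℝ with finite first moments, ∫_ℝ |F(t) - G(t)| dt = ∫₀¹ |F^{-1}(u) - G^{-1}(u)| du, i.e., the area between the CDFs equals the area between the quantile functions. -/

import Mathlib

open MeasureTheory
open scoped ENNReal

noncomputable def quantile (μ : Measure ℝ) (u : ℝ) : ℝ :=
  sInf {x : ℝ | u ≤ ProbabilityTheory.cdf μ x}

open ProbabilityTheory Set in
lemma le_cdf_iff_quantile_le (μ : Measure ℝ) [IsProbabilityMeasure μ] {u : ℝ}
    (h0 : 0 < u) (h1 : u < 1) (t : ℝ) :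
    u ≤ cdf μ t ↔ quantile μ u ≤ t := by
  set S : Set ℝ := {x : ℝ | u ≤ cdf μ x} with hS
  have hne : S.Nonempty := by
    rcases ((tendsto_cdf_atTop μ).eventually_const_lt h1).exists with ⟨x, hx⟩
    exact ⟨x, hx.le⟩
  have hbdd : BddBelow S := by
    rcases ((tendsto_cdf_atBot μ).eventually_lt_const h0).exists with ⟨x₀, hx₀⟩
    refine ⟨x₀, fun s hs => ?_⟩
    by_contra hlt
    push_neg at hlt
    exact absurd (hs.trans ((cdf μ).mono hlt.le)) (not_le.mpr hx₀)
  constructor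
  · intro h
    exact csInf_le hbdd h
  · intro h
    have key : u ≤ cdf μ (sInf S) := by
      have hev : ∀ x ∈ Ioi (sInf S), u ≤ cdf μ x := by
        intro x hx
        rcases (csInf_lt_iff hbdd hne).mp hx with ⟨s, hs, hsx⟩
        exact le_trans hs ((cdf μ).mono hsx.le)
      have hT : Filter.Tendsto (cdf μ) (nhdsWithin (sInf S) (Ioi (sInf S))) (nhds (cdf μ (sInf S))) :=
        ((cdf μ).right_continuous (sInf S)).mono_left (nhdsWithin_mono _ Ioi_subset_Ici_self)
      exact ge_of_tendsto hT (eventually_nhdsWithin_of_forall hev)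
    exact key.trans ((cdf μ).mono h)

open Set in
lemma vol_xor_le_aux {a b : ℝ} (hba : b ≤ a) (hb0 : 0 ≤ b) (ha1 : a ≤ 1) :
    volume ({u : ℝ | (u ≤ a ∧ ¬ u ≤ b) ∨ (u ≤ b ∧ ¬ u ≤ a)} ∩ Ioo 0 1)
      = ENNReal.ofReal |a - b| := by
  have hset : {u : ℝ | (u ≤ a ∧ ¬ u ≤ b) ∨ (u ≤ b ∧ ¬ u ≤ a)} = Ioc b a := by
    ext u
    simp only [mem_setOf_eq, mem_Ioc, not_le]
    constructor
    · rintro (⟨h1, h2⟩ | ⟨h1, h2⟩)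
      · exact ⟨h2, h1⟩
      · exact absurd (h1.trans hba) (not_le.mpr h2)
    · rintro ⟨h1, h2⟩
      exact Or.inl ⟨h2, h1⟩
  rw [hset, abs_of_nonneg (sub_nonneg.mpr hba)]
  refine le_antisymm ?_ ?_
  · calc volume (Ioc b a ∩ Ioo 0 1) ≤ volume (Ioc b a) :=
          measure_mono inter_subset_left
      _ = ENNReal.ofReal (a - b) := Real.volume_Ioc
  · calc ENNReal.ofReal (a - b) = volume (Ioo b a) := Real.volume_Ioo.symm
      _ ≤ volume (Ioc b a ∩ Ioo 0 1) := by
          refine measure_mono fun u hu => ⟨⟨hu.1, hu.2.le⟩, hb0.trans_lt hu.1, hu.2.trans_le ha1⟩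

open Set in
lemma vol_xor_le (a b : ℝ) (ha0 : 0 ≤ a) (ha1 : a ≤ 1) (hb0 : 0 ≤ b) (hb1 : b ≤ 1) :
    volume ({u : ℝ | (u ≤ a ∧ ¬ u ≤ b) ∨ (u ≤ b ∧ ¬ u ≤ a)} ∩ Ioo 0 1)
      = ENNReal.ofReal |a - b| := by
  rcases le_total b a with h | h
  · exact vol_xor_le_aux h hb0 ha1
  · have : {u : ℝ | (u ≤ a ∧ ¬ u ≤ b) ∨ (u ≤ b ∧ ¬ u ≤ a)}
        = {u : ℝ | (u ≤ b ∧ ¬ u ≤ a) ∨ (u ≤ a ∧ ¬ u ≤ b)} := by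
      ext u; simp only [mem_setOf_eq]; tauto
    rw [this, abs_sub_comm]
    exact vol_xor_le_aux h ha0 hb1

open Set in
lemma vol_xor_ge_aux {a b : ℝ} (hba : b ≤ a) :
    volume {t : ℝ | (a ≤ t ∧ ¬ b ≤ t) ∨ (b ≤ t ∧ ¬ a ≤ t)} = ENNReal.ofReal |a - b| := by
  have hset : {t : ℝ | (a ≤ t ∧ ¬ b ≤ t) ∨ (b ≤ t ∧ ¬ a ≤ t)} = Ico b a := by
    ext t
    simp only [mem_setOf_eq, mem_Ico, not_le]
    constructor
    · rintro (⟨h1, h2⟩ | ⟨h1, h2⟩)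
      · exact absurd (hba.trans h1) (not_le.mpr h2)
      · exact ⟨h1, h2⟩
    · rintro ⟨h1, h2⟩
      exact Or.inr ⟨h1, h2⟩
  rw [hset, abs_of_nonneg (sub_nonneg.mpr hba), Real.volume_Ico]

open Set in
lemma vol_xor_ge (a b : ℝ) :
    volume {t : ℝ | (a ≤ t ∧ ¬ b ≤ t) ∨ (b ≤ t ∧ ¬ a ≤ t)} = ENNReal.ofReal |a - b| := by
  rcases le_total b a with h | h
  · exact vol_xor_ge_aux h
  · have : {t : ℝ | (a ≤ t ∧ ¬ b ≤ t) ∨ (b ≤ t ∧ ¬ a ≤ t)}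
        = {t : ℝ | (b ≤ t ∧ ¬ a ≤ t) ∨ (a ≤ t ∧ ¬ b ≤ t)} := by
      ext t; simp only [mem_setOf_eq]; tauto
    rw [this, abs_sub_comm]
    exact vol_xor_ge_aux h

open Set in
lemma quantile_monotoneOn (μ : Measure ℝ) [IsProbabilityMeasure μ] :
    MonotoneOn (quantile μ) (Ioo (0:ℝ) 1) := by
  intro u hu v hv huv
  have hv' : v ≤ ProbabilityTheory.cdf μ (quantile μ v) :=
    (le_cdf_iff_quantile_le μ hv.1 hv.2 _).mpr le_rfl
  exact (le_cdf_iff_quantile_le μ hu.1 hu.2 _).mp (huv.trans hv')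

open ProbabilityTheory Set

theorem area_between_cdfs_eq_area_between_quantiles
    (μ ν : Measure ℝ) [IsProbabilityMeasure μ] [IsProbabilityMeasure ν]
    (hμ : Integrable id μ) (hν : Integrable id ν) :
    ∫ t : ℝ, |ProbabilityTheory.cdf μ t - ProbabilityTheory.cdf ν t|
      = ∫ u in Set.Ioo (0:ℝ) 1, |quantile μ u - quantile ν u| := by
  set F := cdf μ with hF
  set G := cdf ν with hG
  set q1 := quantile μ with hq1
  set q2 := quantile ν with hq2
  -- the "area between graphs" set
  set S : Set (ℝ × ℝ) :=
    {p | (p.2 ≤ F p.1 ∧ ¬ p.2 ≤ G p.1) ∨ (p.2 ≤ G p.1 ∧ ¬ p.2 ≤ F p.1)} with hSdef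
  have hA : MeasurableSet {p : ℝ × ℝ | p.2 ≤ F p.1} :=
    measurableSet_le measurable_snd (F.mono.measurable.comp measurable_fst)
  have hB : MeasurableSet {p : ℝ × ℝ | p.2 ≤ G p.1} :=
    measurableSet_le measurable_snd (G.mono.measurable.comp measurable_fst)
  have hSm : MeasurableSet S := by
    have : S = ({p : ℝ × ℝ | p.2 ≤ F p.1} \ {p : ℝ × ℝ | p.2 ≤ G p.1})
        ∪ ({p : ℝ × ℝ | p.2 ≤ G p.1} \ {p : ℝ × ℝ | p.2 ≤ F p.1}) := rfl
    rw [this]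
    exact (hA.diff hB).union (hB.diff hA)
  -- slice in u, for fixed t
  have step1 : ∀ t : ℝ,
      (∫⁻ u in Ioo (0:ℝ) 1, S.indicator 1 (t, u)) = ENNReal.ofReal |F t - G t| := by
    intro t
    have hslice : MeasurableSet {u : ℝ | (u ≤ F t ∧ ¬ u ≤ G t) ∨ (u ≤ G t ∧ ¬ u ≤ F t)} := by
      have h1 : MeasurableSet {u : ℝ | u ≤ F t} := measurableSet_Iic
      have h2 : MeasurableSet {u : ℝ | u ≤ G t} := measurableSet_Iic
      exact ((h1.diff h2).union (h2.diff h1))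
    have heq : (fun u : ℝ => S.indicator 1 (t, u))
        = ({u : ℝ | (u ≤ F t ∧ ¬ u ≤ G t) ∨ (u ≤ G t ∧ ¬ u ≤ F t)}).indicator
            (fun _ => (1 : ℝ≥0∞)) := rfl
    rw [heq]
    refine (lintegral_indicator_one hslice).trans ?_
    rw [Measure.restrict_apply hslice]
    exact vol_xor_le (F t) (G t) (cdf_nonneg μ t) (cdf_le_one μ t)
      (cdf_nonneg ν t) (cdf_le_one ν t)
  -- slice in t, for fixed u ∈ (0,1)
  have step2 : ∀ u ∈ Ioo (0:ℝ) 1,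
      (∫⁻ t : ℝ, S.indicator 1 (t, u)) = ENNReal.ofReal |q1 u - q2 u| := by
    intro u hu
    have hiff1 : ∀ t : ℝ, u ≤ F t ↔ q1 u ≤ t := le_cdf_iff_quantile_le μ hu.1 hu.2
    have hiff2 : ∀ t : ℝ, u ≤ G t ↔ q2 u ≤ t := le_cdf_iff_quantile_le ν hu.1 hu.2
    have hseteq : {t : ℝ | (u ≤ F t ∧ ¬ u ≤ G t) ∨ (u ≤ G t ∧ ¬ u ≤ F t)}
        = {t : ℝ | (q1 u ≤ t ∧ ¬ q2 u ≤ t) ∨ (q2 u ≤ t ∧ ¬ q1 u ≤ t)} := by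
      ext t; simp only [Set.mem_setOf_eq, hiff1, hiff2]
    have heq : (fun t : ℝ => S.indicator 1 (t, u))
        = ({t : ℝ | (u ≤ F t ∧ ¬ u ≤ G t) ∨ (u ≤ G t ∧ ¬ u ≤ F t)}).indicator
            (fun _ => (1 : ℝ≥0∞)) := rfl
    have hms : MeasurableSet {t : ℝ | (q1 u ≤ t ∧ ¬ q2 u ≤ t) ∨ (q2 u ≤ t ∧ ¬ q1 u ≤ t)} := by
      have h1 : MeasurableSet {t : ℝ | q1 u ≤ t} := measurableSet_Ici
      have h2 : MeasurableSet {t : ℝ | q2 u ≤ t} := measurableSet_Ici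
      exact ((h1.diff h2).union (h2.diff h1))
    rw [heq, hseteq]
    exact (lintegral_indicator_one hms).trans (vol_xor_ge (q1 u) (q2 u))
  -- Tonelli swap
  have hunc : AEMeasurable (fun p : ℝ × ℝ => S.indicator (1 : ℝ × ℝ → ℝ≥0∞) p)
      (volume.prod (volume.restrict (Ioo (0:ℝ) 1))) :=
    ((measurable_one).indicator hSm).aemeasurable
  have hswap : (∫⁻ t : ℝ, ∫⁻ u in Ioo (0:ℝ) 1, S.indicator 1 (t, u))
      = ∫⁻ u in Ioo (0:ℝ) 1, ∫⁻ t : ℝ, S.indicator 1 (t, u) :=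
    lintegral_lintegral_swap hunc
  -- the key lintegral identity
  have key : (∫⁻ t : ℝ, ENNReal.ofReal |F t - G t|)
      = ∫⁻ u in Ioo (0:ℝ) 1, ENNReal.ofReal |q1 u - q2 u| := by
    calc (∫⁻ t : ℝ, ENNReal.ofReal |F t - G t|)
        = ∫⁻ t : ℝ, ∫⁻ u in Ioo (0:ℝ) 1, S.indicator 1 (t, u) := by
          exact lintegral_congr fun t => (step1 t).symm
      _ = ∫⁻ u in Ioo (0:ℝ) 1, ∫⁻ t : ℝ, S.indicator 1 (t, u) := hswap
      _ = ∫⁻ u in Ioo (0:ℝ) 1, ENNReal.ofReal |q1 u - q2 u| :=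
          setLIntegral_congr_fun measurableSet_Ioo step2
  -- convert to Bochner integrals
  have hq1m : AEMeasurable q1 (volume.restrict (Ioo (0:ℝ) 1)) :=
    aemeasurable_restrict_of_monotoneOn measurableSet_Ioo (quantile_monotoneOn μ)
  have hq2m : AEMeasurable q2 (volume.restrict (Ioo (0:ℝ) 1)) :=
    aemeasurable_restrict_of_monotoneOn measurableSet_Ioo (quantile_monotoneOn ν)
  have hL : ∫ t : ℝ, |F t - G t|
      = ENNReal.toReal (∫⁻ t : ℝ, ENNReal.ofReal |F t - G t|) :=
    integral_eq_lintegral_of_nonneg_ae (ae_of_all _ fun t => abs_nonneg _)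
      ((F.mono.measurable.sub G.mono.measurable).abs).aestronglyMeasurable
  have hR : ∫ u in Ioo (0:ℝ) 1, |q1 u - q2 u|
      = ENNReal.toReal (∫⁻ u in Ioo (0:ℝ) 1, ENNReal.ofReal |q1 u - q2 u|) :=
    integral_eq_lintegral_of_nonneg_ae (ae_of_all _ fun u => abs_nonneg _)
      ((continuous_abs.measurable.comp_aemeasurable (hq1m.sub hq2m))).aestronglyMeasurable
  rw [hL, hR, key]
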